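/- Let α ∈ (1/3, 1), let x : [0,3] → ℝ be α-Hölder, let h : ℝ → ℝ be of class C², and let H : ℝ → ℝ be an antiderivative of h (H′ = h). Then for all 0 ≤ r ≤ s ≤ 2 the Russo–Vallois symmetric integral ∫_r^s h(x(u)) d°x(u) exists and equals H(x(s)) − H(x(r)). -/

import Mathlib

open MeasureTheory Filter Set

/-- `z` is `α`-Hölder on the interval `[a, b]`. -/
def HolderOnIcc (α a b : ℝ) (z : ℝ → ℝ) : Prop :=
  ∃ L > 0, ∀ s ∈ Set.Icc a b, ∀ t ∈ Set.Icc a b, |z t - z s| ≤ L * |t - s| ^ α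

/-- `I` is the Russo–Vallois symmetric integral `∫_a^b z(s) d°x(s)` (for `a > b` the
interval integral is by convention the negative of the one from `b` to `a`). -/
def RVTendsto (z x : ℝ → ℝ) (a b I : ℝ) : Prop :=
  Filter.Tendsto
    (fun ε : ℝ => ε⁻¹ * ∫ s in a..b, ((z (s + ε) + z s) / 2) * (x (s + ε) - x s))
    (nhdsWithin 0 (Set.Ioi 0)) (nhds I)

/-- `A` is an `α`-Lévy area of order 0 associated with `γ = (x, y)` on `[0, 2]`. -/
def IsLevyArea0 (α : ℝ) (x y : ℝ → ℝ) (A : ℝ → ℝ → ℝ) : Prop :=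
  (∀ r ∈ Set.Icc (0:ℝ) 2, ∀ s ∈ Set.Icc (0:ℝ) 2, ∀ t ∈ Set.Icc (0:ℝ) 2,
    A r s + A s t + A t r
      = -(1/2) * ((y t - y s) * (x r - x s) - (y r - y s) * (x t - x s)))
  ∧ ∃ C > 0, ∀ s ∈ Set.Icc (0:ℝ) 2, ∀ t ∈ Set.Icc (0:ℝ) 2,
      |A s t| ≤ C * |t - s| ^ (2 * α)

/-- The `ε`-approximation `I_ε^{[a,b]}(f)` of the corrected symmetric integral. -/
noncomputable def Ieps (x y : ℝ → ℝ) (A : ℝ → ℝ → ℝ) (f : ℝ → ℝ) (a b ε : ℝ) : ℝ :=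
  ε⁻¹ * (∫ u in a..b, ((f (y u) + f (y (u + ε))) / 2) * (x (u + ε) - x u))
    + ε⁻¹ * (∫ u in a..b, deriv f (y u) * A u (u + ε))


lemma holder_contOn {α a b L : ℝ} (hα : 0 < α) {z : ℝ → ℝ}
    (hL : ∀ s ∈ Set.Icc a b, ∀ t ∈ Set.Icc a b, |z t - z s| ≤ L * |t - s| ^ α) :
    ContinuousOn z (Set.Icc a b) := by
  intro s hs
  have h1 : Tendsto (fun t : ℝ => L * |t - s| ^ α) (nhdsWithin s (Set.Icc a b)) (nhds 0) := by
    have h2 : Tendsto (fun t : ℝ => |t - s|) (nhds s) (nhds 0) := by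
      have : Continuous fun t : ℝ => |t - s| := (continuous_id.sub continuous_const).abs
      simpa using this.tendsto s
    have h3 : ContinuousAt (fun y : ℝ => y ^ α) 0 :=
      Real.continuousAt_rpow_const 0 α (Or.inr hα.le)
    have h4 : Tendsto (fun t : ℝ => |t - s| ^ α) (nhds s) (nhds 0) := by
      have := h3.tendsto.comp h2
      simpa [Function.comp_def, Real.zero_rpow hα.ne'] using this
    have h6 := (h4.const_mul L).mono_left
      (nhdsWithin_le_nhds : nhdsWithin s (Set.Icc a b) ≤ nhds s)
    simpa using h6
  have h5 : Tendsto (fun t => z t - z s) (nhdsWithin s (Set.Icc a b)) (nhds 0) := by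
    apply squeeze_zero_norm' _ h1
    filter_upwards [self_mem_nhdsWithin] with t ht
    simpa using hL s hs t ht
  simpa [ContinuousWithinAt] using tendsto_sub_nhds_zero_iff.mp h5

lemma trapezoid_est {h H : ℝ → ℝ} (hh : ContDiff ℝ 2 h) (hH : ∀ z : ℝ, HasDerivAt H (h z) z)
    {R M : ℝ} (hM : ∀ z ∈ Set.Icc (-R) R, |deriv (deriv h) z| ≤ M)
    {a b : ℝ} (ha : a ∈ Set.Icc (-R) R) (hb : b ∈ Set.Icc (-R) R) :
    |H b - H a - (h a + h b) / 2 * (b - a)| ≤ M * |b - a| ^ 3 := by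
  have hdh : Differentiable ℝ h := hh.differentiable (by simp)
  have hh2 : ContDiff ℝ (1 + 1) h := by norm_num; exact hh
  have hd1 : ContDiff ℝ 1 (deriv h) := (contDiff_succ_iff_deriv.mp hh2).2.2
  have hddh : Differentiable ℝ (deriv h) := hd1.differentiable (by simp)
  set S := Set.uIcc a b with hS
  have hSsub : S ⊆ Set.Icc (-R) R := Set.uIcc_subset_Icc ha hb
  have hconv : Convex ℝ S := convex_uIcc a b
  have hM0 : 0 ≤ M := le_trans (abs_nonneg _) (hM a ha)
  have hdiam : ∀ u ∈ S, ∀ v ∈ S, |u - v| ≤ |b - a| := by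
    intro u hu v hv
    have h1 : a ⊓ b ≤ u ∧ u ≤ a ⊔ b := hu
    have h2 : a ⊓ b ≤ v ∧ v ≤ a ⊔ b := hv
    have hba : |b - a| = a ⊔ b - a ⊓ b := by
      exact (max_sub_min_eq_abs a b).symm
    rw [abs_sub_le_iff]
    constructor <;> linarith [h1.1, h1.2, h2.1, h2.2]
  -- Step B: |h t - h a - deriv h t * (t - a)| ≤ M * |b - a| * |t - a| for t ∈ S
  have hStepB : ∀ t ∈ S, |h t - h a - deriv h t * (t - a)| ≤ M * |b - a| * |t - a| := by
    intro t ht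
    have hchi : ∀ u ∈ S, HasDerivWithinAt (fun u => h u - deriv h t * u)
        (deriv h u - deriv h t) S u := by
      intro u _
      have hd : HasDerivAt (fun u => h u - deriv h t * u) (deriv h u - deriv h t) u := by
        have := (hdh u).hasDerivAt.sub ((hasDerivAt_id' u).const_mul (deriv h t))
        simp only [Pi.sub_def, mul_one] at this
        exact this
      exact hd.hasDerivWithinAt
    have hbound : ∀ u ∈ S, ‖deriv h u - deriv h t‖ ≤ M * |b - a| := by
      intro u hu
      have hlip : ‖deriv h u - deriv h t‖ ≤ M * ‖u - t‖ := by
        apply hconv.norm_image_sub_le_of_norm_hasDerivWithin_le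
          (fun v hv => (hddh v).hasDerivAt.hasDerivWithinAt)
          (fun v hv => ?_) ht hu
        simpa [Real.norm_eq_abs] using hM v (hSsub hv)
      refine hlip.trans ?_
      exact mul_le_mul_of_nonneg_left (by simpa [Real.norm_eq_abs] using hdiam u hu t ht) hM0
    have := hconv.norm_image_sub_le_of_norm_hasDerivWithin_le hchi hbound
      (Set.left_mem_uIcc) ht
    calc |h t - h a - deriv h t * (t - a)|
        = ‖(h t - deriv h t * t) - (h a - deriv h t * a)‖ := by rw [Real.norm_eq_abs]; ring_nf
      _ ≤ M * |b - a| * ‖t - a‖ := this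
      _ = M * |b - a| * |t - a| := by rw [Real.norm_eq_abs]
  -- Step C
  have hpsi : ∀ t ∈ S, HasDerivWithinAt (fun t => H t - (h a + h t) / 2 * (t - a))
      ((h t - h a) / 2 - deriv h t * (t - a) / 2) S t := by
    intro t ht
    have h1 : HasDerivAt (fun t => (h a + h t) / 2 * (t - a))
        ((deriv h t / 2) * (t - a) + (h a + h t) / 2 * 1) t := by
      have hA : HasDerivAt (fun t => (h a + h t) / 2) (deriv h t / 2) t := by
        simpa [add_div] using
          (((hdh t).hasDerivAt.const_add (h a)).div_const 2)
      exact hA.mul ((hasDerivAt_id t).sub_const a)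
    have := (hH t).sub h1
    simp only [Pi.sub_def] at this
    exact this.hasDerivWithinAt.congr_deriv (by ring)
  have hpsibound : ∀ t ∈ S, ‖(h t - h a) / 2 - deriv h t * (t - a) / 2‖ ≤ M / 2 * |b - a| ^ 2 := by
    intro t ht
    have h1 : (h t - h a) / 2 - deriv h t * (t - a) / 2
        = (h t - h a - deriv h t * (t - a)) / 2 := by ring
    rw [Real.norm_eq_abs, h1, abs_div]
    have h2 := hStepB t ht
    have h3 : |t - a| ≤ |b - a| := by
      simpa [abs_sub_comm a b] using hdiam t ht a Set.left_mem_uIcc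
    have : |h t - h a - deriv h t * (t - a)| ≤ M * |b - a| * |b - a| :=
      h2.trans (mul_le_mul_of_nonneg_left h3 (by positivity))
    rw [abs_of_pos (by norm_num : (0:ℝ) < 2)]
    nlinarith [abs_nonneg (b - a)]
  have hfinal := hconv.norm_image_sub_le_of_norm_hasDerivWithin_le hpsi hpsibound
    Set.left_mem_uIcc Set.right_mem_uIcc
  have heq : (fun t => H t - (h a + h t) / 2 * (t - a)) b
      - (fun t => H t - (h a + h t) / 2 * (t - a)) a = H b - H a - (h a + h b) / 2 * (b - a) := by
    simp; ring
  rw [Real.norm_eq_abs, Real.norm_eq_abs, heq] at hfinal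
  refine hfinal.trans ?_
  have h7 : M / 2 * |b - a| ^ 2 * |b - a| = M * |b - a| ^ 3 / 2 := by ring
  have h8 : 0 ≤ M * |b - a| ^ 3 := mul_nonneg hM0 (pow_nonneg (abs_nonneg _) 3)
  linarith

theorem stmt_10 (α : ℝ) (hα : α ∈ Set.Ioo (1/3 : ℝ) 1)
    (x : ℝ → ℝ) (hx : HolderOnIcc α 0 3 x)
    (h : ℝ → ℝ) (hh : ContDiff ℝ 2 h)
    (H : ℝ → ℝ) (hH : ∀ z : ℝ, HasDerivAt H (h z) z) :
    ∀ r s : ℝ, 0 ≤ r → r ≤ s → s ≤ 2 →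
      RVTendsto (fun u => h (x u)) x r s (H (x s) - H (x r)) := by
  intro r s hr hrs hs2
  obtain ⟨L, hL0, hLip⟩ := hx
  have hα0 : 0 < α := lt_trans (by norm_num) hα.1
  have hxC : ContinuousOn x (Set.Icc 0 3) := holder_contOn hα0 hLip
  have hHdiff : Differentiable ℝ H := fun z => (hH z).differentiableAt
  set F : ℝ → ℝ := fun u => H (x u) with hFdef
  have hF : ContinuousOn F (Set.Icc (0:ℝ) 3) :=
    hHdiff.continuous.comp_continuousOn hxC
  obtain ⟨R, hR⟩ := isCompact_Icc.exists_bound_of_continuousOn hxC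
  have hR0 : 0 ≤ R := le_trans (norm_nonneg _) (hR 0 (by norm_num))
  have hmem : ∀ u ∈ Set.Icc (0:ℝ) 3, x u ∈ Set.Icc (-R) R := by
    intro u hu
    have := abs_le.mp (by simpa [Real.norm_eq_abs] using hR u hu)
    exact ⟨this.1, this.2⟩
  have hh2 : ContDiff ℝ (1 + 1) h := by norm_num; exact hh
  have hd1 : ContDiff ℝ 1 (deriv h) := (contDiff_succ_iff_deriv.mp hh2).2.2
  have hd2c : Continuous (deriv (deriv h)) := hd1.continuous_deriv le_rfl
  obtain ⟨M, hM⟩ := isCompact_Icc.exists_bound_of_continuousOn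
    (hd2c.continuousOn : ContinuousOn (deriv (deriv h)) (Set.Icc (-R) R))
  have hM' : ∀ z ∈ Set.Icc (-R) R, |deriv (deriv h) z| ≤ M := fun z hz => by
    simpa [Real.norm_eq_abs] using hM z hz
  have hM0 : 0 ≤ M := le_trans (abs_nonneg _) (hM' 0 ⟨neg_nonpos.mpr hR0, hR0⟩)
  have hs0 : (0:ℝ) ≤ s := le_trans hr hrs
  have hr3 : r ∈ Set.Icc (0:ℝ) 3 := ⟨hr, by linarith⟩
  have hs3 : s ∈ Set.Icc (0:ℝ) 3 := ⟨hs0, by linarith⟩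
  have hFi : ∀ a b : ℝ, a ∈ Set.Icc (0:ℝ) 3 → b ∈ Set.Icc (0:ℝ) 3 →
      IntervalIntegrable F volume a b := fun a b ha hb =>
    (hF.mono (Set.uIcc_subset_Icc ha hb)).intervalIntegrable
  -- FTC-type limit
  have key : ∀ c : ℝ, c ∈ Set.Icc (0:ℝ) 2 →
      Tendsto (fun ε : ℝ => ε⁻¹ * ∫ u in c..(c + ε), F u)
        (nhdsWithin 0 (Set.Ioi 0)) (nhds (F c)) := by
    intro c hc
    have hc3 : c ∈ Set.Icc (0:ℝ) 3 := ⟨hc.1, by linarith [hc.2]⟩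
    have hIcc_mem : Set.Icc c 3 ∈ nhdsWithin c (Set.Ioi c) := by
      rw [mem_nhdsWithin]
      exact ⟨Set.Iio 3, isOpen_Iio, by simpa using lt_of_le_of_lt hc.2 (by norm_num),
        fun y hy => ⟨le_of_lt hy.2, le_of_lt hy.1⟩⟩
    have hmeas : StronglyMeasurableAtFilter F (nhdsWithin c (Set.Ioi c)) :=
      ⟨Set.Icc c 3, hIcc_mem,
        (hF.mono (Set.Icc_subset_Icc hc3.1 le_rfl)).aestronglyMeasurable measurableSet_Icc⟩
    have hcont : ContinuousWithinAt F (Set.Ioi c) c :=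
      ((hF.mono (Set.Icc_subset_Icc hc3.1 le_rfl)) c ⟨le_rfl, hc3.2⟩).mono_of_mem_nhdsWithin hIcc_mem
    have hder : HasDerivWithinAt (fun t => ∫ u in c..t, F u) (F c) (Set.Ici c) c :=
      intervalIntegral.integral_hasDerivWithinAt_right (hFi c c hc3 hc3) hmeas hcont
    rw [hasDerivWithinAt_iff_tendsto_slope, Set.Ici_sdiff_left] at hder
    have hmap : Tendsto (fun ε : ℝ => c + ε) (nhdsWithin 0 (Set.Ioi 0))
        (nhdsWithin c (Set.Ioi c)) := by
      apply tendsto_nhdsWithin_of_tendsto_nhds_of_eventually_within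
      · have h1 : Tendsto (fun ε : ℝ => c + ε) (nhds (0:ℝ)) (nhds (c + 0)) :=
          tendsto_id.const_add c
        rw [add_zero] at h1
        exact h1.mono_left
          (nhdsWithin_le_nhds : nhdsWithin (0:ℝ) (Set.Ioi 0) ≤ nhds 0)
      · filter_upwards [self_mem_nhdsWithin] with ε hε
        exact lt_add_of_pos_right c hε
    refine (hder.comp hmap).congr' ?_
    filter_upwards [self_mem_nhdsWithin] with ε hε
    have hεne : (ε : ℝ) ≠ 0 := ne_of_gt hε
    show slope (fun t => ∫ u in c..t, F u) c (c + ε) = ε⁻¹ * ∫ u in c..(c + ε), F u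
    rw [slope_def_field, intervalIntegral.integral_same]
    rw [add_sub_cancel_left, sub_zero, div_eq_inv_mul]
  have hTs := key s ⟨hs0, hs2⟩
  have hTr := key r ⟨hr, hrs.trans hs2⟩
  -- error term tends to 0
  have hbound : Tendsto (fun ε : ℝ => ε⁻¹ * (M * (L * ε ^ α) ^ 3 * |s - r|))
      (nhdsWithin 0 (Set.Ioi 0)) (nhds 0) := by
    have hexp : 0 < α * 3 - 1 := by nlinarith [hα.1]
    have h0 : Tendsto (fun ε : ℝ => ε ^ (α * 3 - 1)) (nhdsWithin 0 (Set.Ioi 0)) (nhds 0) := by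
      have h1 := (Real.continuousAt_rpow_const 0 (α * 3 - 1)
        (Or.inr hexp.le)).continuousWithinAt (s := Set.Ioi (0:ℝ))
      simpa [ContinuousWithinAt, Real.zero_rpow hexp.ne'] using h1
    have h1 := h0.const_mul (M * L ^ 3 * |s - r|)
    rw [mul_zero] at h1
    refine h1.congr' ?_
    filter_upwards [self_mem_nhdsWithin] with ε hε
    have hε0 : (0:ℝ) < ε := hε
    have e1 : (ε ^ α) ^ (3:ℕ) = ε ^ (α * 3) := by
      rw [← Real.rpow_natCast (ε ^ α) 3, ← Real.rpow_mul hε0.le]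
      norm_num
    have e2 : ε ^ (α * 3 - 1) = ε ^ (α * 3) * ε⁻¹ := by
      rw [Real.rpow_sub hε0, Real.rpow_one, div_eq_mul_inv]
    calc M * L ^ 3 * |s - r| * ε ^ (α * 3 - 1)
        = ε⁻¹ * (M * (L ^ 3 * (ε ^ α) ^ 3) * |s - r|) := by rw [e2, e1]; ring
      _ = ε⁻¹ * (M * (L * ε ^ α) ^ 3 * |s - r|) := by rw [mul_pow]
  have hTerr : Tendsto (fun ε : ℝ => ε⁻¹ * ∫ u in r..s,
      (((h (x (u + ε)) + h (x u)) / 2) * (x (u + ε) - x u) - (F (u + ε) - F u)))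
      (nhdsWithin 0 (Set.Ioi 0)) (nhds 0) := by
    apply squeeze_zero_norm' _ hbound
    filter_upwards [Ioo_mem_nhdsGT_of_mem (Set.left_mem_Ico.mpr one_pos)] with ε hε
    obtain ⟨hε0, hε1⟩ := hε
    have hpt : ∀ u ∈ Set.uIoc r s,
        ‖((h (x (u + ε)) + h (x u)) / 2) * (x (u + ε) - x u) - (F (u + ε) - F u)‖
          ≤ M * (L * ε ^ α) ^ 3 := by
      intro u hu
      rw [Set.uIoc_of_le hrs] at hu
      have hu3 : u ∈ Set.Icc (0:ℝ) 3 := ⟨by linarith [hu.1], by linarith [hu.2]⟩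
      have hu3' : u + ε ∈ Set.Icc (0:ℝ) 3 := ⟨by linarith [hu.1], by linarith [hu.2]⟩
      have ha := hmem u hu3
      have hb := hmem (u + ε) hu3'
      have heq : ((h (x (u + ε)) + h (x u)) / 2) * (x (u + ε) - x u) - (F (u + ε) - F u)
          = -(H (x (u + ε)) - H (x u)
              - (h (x u) + h (x (u + ε))) / 2 * (x (u + ε) - x u)) := by
        simp only [hFdef]; ring
      rw [Real.norm_eq_abs, heq, abs_neg]
      refine (trapezoid_est hh hH hM' ha hb).trans ?_
      apply mul_le_mul_of_nonneg_left _ hM0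
      apply pow_le_pow_left₀ (abs_nonneg _) _ 3
      have h5 := hLip u hu3 (u + ε) hu3'
      simpa [add_sub_cancel_left, abs_of_pos hε0] using h5
    have hInt := intervalIntegral.norm_integral_le_of_norm_le_const hpt
    rw [norm_mul, norm_inv, Real.norm_eq_abs, abs_of_pos hε0]
    exact mul_le_mul_of_nonneg_left hInt (inv_nonneg.mpr hε0.le)
  -- assemble
  have hsum := (hTs.sub hTr).add hTerr
  rw [add_zero] at hsum
  unfold RVTendsto
  refine hsum.congr' ?_
  filter_upwards [Ioo_mem_nhdsGT_of_mem (Set.left_mem_Ico.mpr one_pos)] with ε hε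
  obtain ⟨hε0, hε1⟩ := hε
  have hshift_mem : ∀ u ∈ Set.uIcc r s, u + ε ∈ Set.Icc (0:ℝ) 3 := by
    intro u hu
    rw [Set.uIcc_of_le hrs] at hu
    exact ⟨by linarith [hu.1], by linarith [hu.2]⟩
  have hsub03 : Set.uIcc r s ⊆ Set.Icc (0:ℝ) 3 := Set.uIcc_subset_Icc hr3 hs3
  have hcx1 : ContinuousOn (fun u => x (u + ε)) (Set.uIcc r s) :=
    hxC.comp ((continuous_id.add continuous_const).continuousOn) hshift_mem
  have hcx0 : ContinuousOn x (Set.uIcc r s) := hxC.mono hsub03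
  have hgC : ContinuousOn
      (fun u => ((h (x (u + ε)) + h (x u)) / 2) * (x (u + ε) - x u)) (Set.uIcc r s) :=
    (((hh.continuous.comp_continuousOn hcx1).add
      (hh.continuous.comp_continuousOn hcx0)).div_const 2).mul (hcx1.sub hcx0)
  have hdC : ContinuousOn (fun u => F (u + ε) - F u) (Set.uIcc r s) :=
    ((hHdiff.continuous.comp_continuousOn hcx1)).sub (hF.mono hsub03)
  have hgI : IntervalIntegrable
      (fun u => ((h (x (u + ε)) + h (x u)) / 2) * (x (u + ε) - x u)) volume r s :=
    hgC.intervalIntegrable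
  have hdI : IntervalIntegrable (fun u => F (u + ε) - F u) volume r s :=
    hdC.intervalIntegrable
  have hFshiftI : IntervalIntegrable (fun u => F (u + ε)) volume r s :=
    ((hHdiff.continuous.comp_continuousOn hcx1)).intervalIntegrable
  have hre3 : r + ε ∈ Set.Icc (0:ℝ) 3 := ⟨by linarith, by linarith⟩
  have hse3 : s + ε ∈ Set.Icc (0:ℝ) 3 := ⟨by linarith, by linarith⟩
  have e1 : (∫ u in r..s, ((h (x (u + ε)) + h (x u)) / 2) * (x (u + ε) - x u))
      = (∫ u in r..s, (F (u + ε) - F u))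
        + ∫ u in r..s,
            (((h (x (u + ε)) + h (x u)) / 2) * (x (u + ε) - x u) - (F (u + ε) - F u)) := by
    rw [← intervalIntegral.integral_add hdI (hgI.sub hdI)]
    apply intervalIntegral.integral_congr
    intro u _; ring
  have e2 : (∫ u in r..s, (F (u + ε) - F u))
      = (∫ u in (r + ε)..(s + ε), F u) - ∫ u in r..s, F u := by
    rw [intervalIntegral.integral_sub hFshiftI (hFi r s hr3 hs3)]
    congr 1
    exact intervalIntegral.integral_comp_add_right F ε
  have A1 : (∫ u in (r + ε)..s, F u) + (∫ u in s..(s + ε), F u)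
      = ∫ u in (r + ε)..(s + ε), F u :=
    intervalIntegral.integral_add_adjacent_intervals (hFi _ _ hre3 hs3) (hFi _ _ hs3 hse3)
  have A2 : (∫ u in r..(r + ε), F u) + (∫ u in (r + ε)..s, F u) = ∫ u in r..s, F u :=
    intervalIntegral.integral_add_adjacent_intervals (hFi _ _ hr3 hre3) (hFi _ _ hre3 hs3)
  show ε⁻¹ * (∫ u in s..(s + ε), F u) - ε⁻¹ * (∫ u in r..(r + ε), F u)
      + ε⁻¹ * (∫ u in r..s,
          (((h (x (u + ε)) + h (x u)) / 2) * (x (u + ε) - x u) - (F (u + ε) - F u)))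
      = ε⁻¹ * ∫ u in r..s, ((h (x (u + ε)) + h (x u)) / 2) * (x (u + ε) - x u)
  rw [e1, e2, ← A1, ← A2]
  ring
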